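/- Consider the graph G' obtained from a simple graph G = (V, E) by adding a new vertex s joined to every vertex of V by an edge of weight +1, while each original edge of G gets weight −1. If the optimal coalition structure of the weighted graph game on G' has value k', then G contains an independent set of size at least k'/9. -/

import Mathlib

open scoped Classical
open Finset

/-- Value of a coalition structure (labelling `p`) in a weighted graph game. -/
noncomputable def gval {V : Type} [Fintype V] {α : Type} (G : SimpleGraph V)
    (w : Sym2 V → ℚ) (p : V → α) : ℚ :=
  ∑ e : Sym2 V, if e ∈ G.edgeSet ∧ (Sym2.map p e).IsDiag then w e else 0

/-- The graph `G'` obtained from `G` by adding a new vertex `none` joined to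
every original vertex. -/
def addApex {V : Type} (G : SimpleGraph V) : SimpleGraph (Option V) where
  Adj a b := (a = none ∧ b ≠ none) ∨ (b = none ∧ a ≠ none) ∨
    (∃ u v : V, a = some u ∧ b = some v ∧ G.Adj u v)
  symm := by
    constructor
    rintro a b (⟨h1, h2⟩ | ⟨h1, h2⟩ | ⟨u, v, h1, h2, h3⟩)
    · exact Or.inr (Or.inl ⟨h1, h2⟩)
    · exact Or.inl ⟨h1, h2⟩
    · exact Or.inr (Or.inr ⟨v, u, h2, h1, h3.symm⟩)
  loopless := by
    constructor
    rintro a (⟨h1, h2⟩ | ⟨h1, h2⟩ | ⟨u, v, h1, h2, h3⟩)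
    · exact h2 h1
    · exact h2 h1
    · rw [h1] at h2
      obtain rfl : u = v := by simpa using h2
      exact G.loopless.irrefl u h3

/-- Weights for the reduction: edges incident to the apex `none` have weight
`+1`, all original edges have weight `-1`. -/
noncomputable def apexWeightOne (V : Type) : Sym2 (Option V) → ℚ :=
  fun e => if (none : Option V) ∈ e then 1 else -1

private lemma exists_indep {V : Type} [Fintype V] (G : SimpleGraph V) (A : Finset V) :
    ∃ t ⊆ A, (∀ u ∈ t, ∀ v ∈ t, ¬ G.Adj u v) ∧
      A.card ≤ t.card +
        (Finset.univ.filter (fun e : Sym2 V => e ∈ G.edgeSet ∧ ∀ x ∈ e, x ∈ A)).card := by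
  induction A using Finset.strongInduction with
  | _ A ih =>
    by_cases h : ∀ u ∈ A, ∀ v ∈ A, ¬ G.Adj u v
    · exact ⟨A, Finset.Subset.refl A, h, Nat.le_add_right _ _⟩
    · push_neg at h
      obtain ⟨u, hu, v, hv, huv⟩ := h
      obtain ⟨t, hts, hind, hcard⟩ := ih (A.erase u) (Finset.erase_ssubset hu)
      refine ⟨t, hts.trans (Finset.erase_subset _ _), hind, ?_⟩
      have hmem : s(u,v) ∈ Finset.univ.filter
          (fun e : Sym2 V => e ∈ G.edgeSet ∧ ∀ x ∈ e, x ∈ A) := by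
        simp only [Finset.mem_filter, Finset.mem_univ, true_and]
        refine ⟨huv, fun x hx => ?_⟩
        rcases Sym2.mem_iff.1 hx with rfl | rfl <;> assumption
      have hsub : (Finset.univ.filter
            (fun e : Sym2 V => e ∈ G.edgeSet ∧ ∀ x ∈ e, x ∈ A.erase u))
          ⊆ (Finset.univ.filter
            (fun e : Sym2 V => e ∈ G.edgeSet ∧ ∀ x ∈ e, x ∈ A)).erase s(u, v) := by
        intro e he
        simp only [Finset.mem_filter, Finset.mem_univ, true_and] at he
        rw [Finset.mem_erase]
        refine ⟨?_, ?_⟩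
        · rintro rfl
          exact Finset.notMem_erase u A (he.2 u (Sym2.mem_mk_left u v))
        · simp only [Finset.mem_filter, Finset.mem_univ, true_and]
          exact ⟨he.1, fun x hx => Finset.mem_of_mem_erase (he.2 x hx)⟩
      have h1 := Finset.card_le_card hsub
      rw [Finset.card_erase_of_mem hmem] at h1
      have h3 : 0 < (Finset.univ.filter
          (fun e : Sym2 V => e ∈ G.edgeSet ∧ ∀ x ∈ e, x ∈ A)).card :=
        Finset.card_pos.mpr ⟨_, hmem⟩
      have h4 : A.card = (A.erase u).card + 1 := (Finset.card_erase_add_one hu).symm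
      omega

private lemma gval_eq {V : Type} [Fintype V] (G : SimpleGraph V) (p : Option V → ℕ) :
    gval (addApex G) (apexWeightOne V) p =
      ((Finset.univ.filter (fun v : V => p (some v) = p none)).card : ℚ) -
      ((Finset.univ.filter (fun e : Sym2 V =>
        e ∈ G.edgeSet ∧ (Sym2.map (fun v => p (some v)) e).IsDiag)).card : ℚ) := by
  classical
  set T := Finset.univ.filter
    (fun e : Sym2 (Option V) => e ∈ (addApex G).edgeSet ∧ (Sym2.map p e).IsDiag) with hT
  have hg0 : gval (addApex G) (apexWeightOne V) p = ∑ e ∈ T, apexWeightOne V e := by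
    rw [hT, Finset.sum_filter, gval]
    exact Finset.sum_congr rfl (fun x _ => by split_ifs <;> tauto)
  rw [hg0]
  rw [← Finset.sum_filter_add_sum_filter_not T (fun e => (none : Option V) ∈ e)]
  have e1 : T.filter (fun e => (none : Option V) ∈ e) =
      (Finset.univ.filter (fun v : V => p (some v) = p none)).image
        (fun v => s((none : Option V), some v)) := by
    ext e
    induction e using Sym2.ind with
    | _ x y =>
      simp only [hT, Finset.mem_filter, Finset.mem_univ, true_and, Finset.mem_image,
        SimpleGraph.mem_edgeSet, Sym2.map_pair_eq, Sym2.mk_isDiag_iff, Sym2.mem_iff]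
      constructor
      · rintro ⟨⟨hadj, hdiag⟩, hmem⟩
        rcases hadj with ⟨hx, hy⟩ | ⟨hy, hx⟩ | ⟨a, b, rfl, rfl, hab⟩
        · subst hx
          obtain ⟨v, rfl⟩ := Option.ne_none_iff_exists'.1 hy
          exact ⟨v, hdiag.symm, rfl⟩
        · subst hy
          obtain ⟨v, rfl⟩ := Option.ne_none_iff_exists'.1 hx
          exact ⟨v, hdiag, Sym2.eq_swap⟩
        · simp at hmem
      · rintro ⟨v, hv, heq⟩
        rcases Sym2.eq_iff.1 heq with ⟨hx, hy⟩ | ⟨hx, hy⟩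
        · subst hx; subst hy
          exact ⟨⟨Or.inl ⟨rfl, by simp⟩, hv.symm⟩, Or.inl rfl⟩
        · subst hx; subst hy
          exact ⟨⟨Or.inr (Or.inl ⟨rfl, by simp⟩), hv⟩, Or.inr rfl⟩
  have e2 : T.filter (fun e => ¬ (none : Option V) ∈ e) =
      (Finset.univ.filter (fun e : Sym2 V =>
        e ∈ G.edgeSet ∧ (Sym2.map (fun v => p (some v)) e).IsDiag)).image (Sym2.map some) := by
    ext e
    induction e using Sym2.ind with
    | _ x y =>
      simp only [hT, Finset.mem_filter, Finset.mem_univ, true_and, Finset.mem_image,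
        SimpleGraph.mem_edgeSet, Sym2.map_pair_eq, Sym2.mk_isDiag_iff, Sym2.mem_iff]
      constructor
      · rintro ⟨⟨hadj, hdiag⟩, hmem⟩
        push_neg at hmem
        rcases hadj with ⟨hx, hy⟩ | ⟨hy, hx⟩ | ⟨a, b, rfl, rfl, hab⟩
        · exact absurd hx.symm hmem.1
        · exact absurd hy.symm hmem.2
        · exact ⟨s(a, b), ⟨hab, by simpa using hdiag⟩, rfl⟩
      · rintro ⟨f, ⟨hf, hfd⟩, heq⟩
        induction f using Sym2.ind with
        | _ a b =>
          rw [Sym2.map_pair_eq] at heq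
          have hfd' : p (some a) = p (some b) := by simpa using hfd
          rcases Sym2.eq_iff.1 heq with ⟨hx, hy⟩ | ⟨hx, hy⟩
          · subst hx; subst hy
            exact ⟨⟨Or.inr (Or.inr ⟨a, b, rfl, rfl, hf⟩), hfd'⟩, by simp⟩
          · subst hx; subst hy
            exact ⟨⟨Or.inr (Or.inr ⟨b, a, rfl, rfl, hf.symm⟩), hfd'.symm⟩, by simp⟩
  rw [e1, e2]
  have w1 : ∀ x ∈ (Finset.univ.filter (fun v : V => p (some v) = p none)).image
      (fun v => s((none : Option V), some v)), apexWeightOne V x = 1 := by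
    intro x hx
    simp only [Finset.mem_image] at hx
    obtain ⟨v, -, rfl⟩ := hx
    simp [apexWeightOne]
  have w2 : ∀ x ∈ (Finset.univ.filter (fun e : Sym2 V =>
      e ∈ G.edgeSet ∧ (Sym2.map (fun v => p (some v)) e).IsDiag)).image (Sym2.map some),
      apexWeightOne V x = -1 := by
    intro x hx
    simp only [Finset.mem_image] at hx
    obtain ⟨f, -, rfl⟩ := hx
    simp [apexWeightOne, Sym2.mem_map]
  rw [Finset.sum_congr rfl w1, Finset.sum_congr rfl w2, Finset.sum_const, Finset.sum_const,
    Finset.card_image_of_injective _ (fun a b hab => by simpa using hab : Function.Injective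
      (fun v : V => s((none : Option V), some v))),
    Finset.card_image_of_injective _ (Sym2.map.injective (Option.some_injective V))]
  ring

theorem indep_from_optimal_structure {V : Type} [Fintype V]
    (G : SimpleGraph V) (k' : ℚ)
    (hopt : ∃ p : Option V → ℕ, gval (addApex G) (apexWeightOne V) p = k' ∧
      ∀ q : Option V → ℕ, gval (addApex G) (apexWeightOne V) q ≤ k') :
    ∃ t : Finset V, (∀ u ∈ t, ∀ v ∈ t, ¬ G.Adj u v) ∧ k' ≤ 9 * t.card := by
  obtain ⟨p, hval, -⟩ := hopt
  set A := Finset.univ.filter (fun v : V => p (some v) = p none) with hA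
  obtain ⟨t, htA, hind, hcard⟩ := exists_indep G A
  refine ⟨t, hind, ?_⟩
  have hBB' : (Finset.univ.filter (fun e : Sym2 V => e ∈ G.edgeSet ∧ ∀ x ∈ e, x ∈ A)).card ≤
      (Finset.univ.filter (fun e : Sym2 V =>
        e ∈ G.edgeSet ∧ (Sym2.map (fun v => p (some v)) e).IsDiag)).card := by
    apply Finset.card_le_card
    intro e he
    simp only [Finset.mem_filter, Finset.mem_univ, true_and] at he ⊢
    refine ⟨he.1, ?_⟩
    induction e using Sym2.ind with
    | _ a b =>
      have ha : p (some a) = p none := by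
        have := he.2 a (Sym2.mem_mk_left a b); simpa [hA] using this
      have hb : p (some b) = p none := by
        have := he.2 b (Sym2.mem_mk_right a b); simpa [hA] using this
      simp [Sym2.map_pair_eq, Sym2.mk_isDiag_iff, ha, hb]
  have hg := gval_eq G p
  rw [hval] at hg
  have hc1 : (A.card : ℚ) ≤ (t.card : ℚ) +
      ((Finset.univ.filter (fun e : Sym2 V => e ∈ G.edgeSet ∧ ∀ x ∈ e, x ∈ A)).card : ℚ) := by
    exact_mod_cast hcard
  have hc2 : ((Finset.univ.filter (fun e : Sym2 V => e ∈ G.edgeSet ∧ ∀ x ∈ e, x ∈ A)).card : ℚ) ≤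
      ((Finset.univ.filter (fun e : Sym2 V =>
        e ∈ G.edgeSet ∧ (Sym2.map (fun v => p (some v)) e).IsDiag)).card : ℚ) := by
    exact_mod_cast hBB'
  have ht0 : (0 : ℚ) ≤ (t.card : ℚ) := Nat.cast_nonneg _
  linarith
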